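/- arXiv:2506.03405 — 2 statements merged into one kernel-verified Lean document; each statement's English description precedes it below -/
import Mathlib

section
/- If the kernel k is nonnegative, nontrivial, bounded, and has support contained in a compact interval [δ, a_max] with 0 < δ, then the Euler–Lotka equation k̄(λ)=1 has exactly one real root r, and sign(R₀ − 1) = sign(r), where R₀ = k̄(0) = ∫₀^∞ k(a) da. -/
open MeasureTheory Real Set

/-- For a nonnegative, nontrivial, bounded kernel supported in
`[δ, a_max]` with `0 < δ`, the Euler–Lotka equation `k̄(λ) = 1` has exactly one
real root `r`, and `sign (R₀ - 1) = sign r` where `R₀ = k̄(0)`. -/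
theorem eulerLotka_unique_real_root_and_sign
    (k : ℝ → ℝ) (δ amax : ℝ) (hδ : 0 < δ) (hδamax : δ ≤ amax)
    (hk_meas : Measurable k)
    (hk_nonneg : ∀ a, 0 ≤ k a)
    (hk_bdd : ∃ C, ∀ a, k a ≤ C)
    (hk_supp : ∀ a, a ∉ Icc δ amax → k a = 0)
    (hk_nontriv : 0 < volume {a | a ∈ Ioi (0:ℝ) ∧ 0 < k a})
    (K : ℝ → ℝ) (hK : ∀ l, K l = ∫ a in Ioi (0:ℝ), Real.exp (-l * a) * k a)
    (R₀ : ℝ) (hR₀ : R₀ = K 0) :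
    (∃! r : ℝ, K r = 1) ∧
      ∀ r : ℝ, K r = 1 → Real.sign (R₀ - 1) = Real.sign r := by
  obtain ⟨C₀, hC₀⟩ := hk_bdd
  set C := max C₀ 0 with hCdef
  have hC : ∀ a, k a ≤ C := fun a => (hC₀ a).trans (le_max_left _ _)
  have hCpos : 0 ≤ C := le_max_right _ _
  have hamax : 0 < amax := lt_of_lt_of_le hδ hδamax
  set f : ℝ → ℝ → ℝ := fun l a => Real.exp (-l * a) * k a with hfdef
  have hfmeas : ∀ l, Measurable (f l) := fun l =>
    (Real.measurable_exp.comp (measurable_id.const_mul (-l))).mul hk_meas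
  have hsupp : ∀ l, Function.support (f l) ⊆ Icc δ amax := by
    intro l a ha
    by_contra h
    exact ha (by simp [hfdef, hk_supp a h])
  have hIccInt : ∀ l, IntegrableOn (f l) (Icc δ amax) := by
    intro l
    apply Measure.integrableOn_of_bounded (M := Real.exp (|l| * amax) * C)
    · exact (measure_Icc_lt_top).ne
    · exact (hfmeas l).aestronglyMeasurable
    · refine (ae_restrict_iff' measurableSet_Icc).2 (ae_of_all _ ?_)
      intro a ha
      rw [Real.norm_eq_abs, abs_of_nonneg (mul_nonneg (Real.exp_pos _).le (hk_nonneg a))]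
      apply mul_le_mul _ (hC a) (hk_nonneg a) (Real.exp_pos _).le
      apply Real.exp_le_exp.2
      have h1 : -l ≤ |l| := neg_le_abs l
      have h2 : (0:ℝ) ≤ a := le_trans hδ.le ha.1
      nlinarith [abs_nonneg l, ha.2]
  have hInt : ∀ l, Integrable (f l) := fun l =>
    (integrableOn_iff_integrable_of_support_subset (hsupp l)).mp (hIccInt l)
  have hKint : ∀ l, K l = ∫ a, f l a := by
    intro l
    rw [hK l]
    apply setIntegral_eq_integral_of_forall_compl_eq_zero
    intro a ha
    have : a ∉ Icc δ amax := fun h => ha (lt_of_lt_of_le hδ h.1)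
    simp [hfdef, hk_supp a this]
  -- strict antitonicity
  have hanti : ∀ l1 l2 : ℝ, l1 < l2 → K l2 < K l1 := by
    intro l1 l2 hl
    have hg : ∀ a, 0 ≤ f l1 a - f l2 a := by
      intro a
      rcases eq_or_lt_of_le (hk_nonneg a) with h | h
      · simp [hfdef, ← h]
      · have ha : a ∈ Icc δ amax := by
          by_contra hc; rw [hk_supp a hc] at h; exact lt_irrefl 0 h
        have ha0 : 0 < a := lt_of_lt_of_le hδ ha.1
        have : Real.exp (-l2 * a) ≤ Real.exp (-l1 * a) := by
          apply Real.exp_le_exp.2; nlinarith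
        simp only [hfdef]; nlinarith
    have hpos : 0 < ∫ a, (f l1 a - f l2 a) := by
      rw [integral_pos_iff_support_of_nonneg hg ((hInt l1).sub (hInt l2))]
      refine lt_of_lt_of_le hk_nontriv (measure_mono ?_)
      intro a ha
      obtain ⟨ha0, hka⟩ := ha
      have ha0' : 0 < a := ha0
      have hlt : Real.exp (-l2 * a) < Real.exp (-l1 * a) := by
        apply Real.exp_lt_exp.2; nlinarith
      simp only [Function.mem_support, hfdef]
      intro hcon
      nlinarith [hcon]
    rw [integral_sub (hInt l1) (hInt l2)] at hpos
    rw [hKint l1, hKint l2]; linarith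
  have hk_int : Integrable k := by
    have := hInt 0; simpa [hfdef] using this
  have hK0 : K 0 = ∫ a, k a := by
    rw [hKint 0]; simp [hfdef]
  have hR0pos : 0 < R₀ := by
    rw [hR₀, hK0]
    rw [integral_pos_iff_support_of_nonneg hk_nonneg hk_int]
    refine lt_of_lt_of_le hk_nontriv (measure_mono ?_)
    intro a ⟨_, h⟩
    exact ne_of_gt h
  -- upper and lower bounds
  have hub : ∀ l : ℝ, 0 ≤ l → K l ≤ Real.exp (-l * δ) * R₀ := by
    intro l hl
    rw [hR₀, hK0, ← integral_const_mul, hKint l]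
    apply integral_mono (hInt l) (hk_int.const_mul _)
    intro a
    rcases eq_or_lt_of_le (hk_nonneg a) with h | h
    · simp [hfdef, ← h]
    · have ha : a ∈ Icc δ amax := by
        by_contra hc; rw [hk_supp a hc] at h; exact lt_irrefl 0 h
      have : Real.exp (-l * a) ≤ Real.exp (-l * δ) := by
        apply Real.exp_le_exp.2; nlinarith [ha.1]
      simp only [hfdef]; nlinarith
  have hlb : ∀ l : ℝ, l ≤ 0 → Real.exp (-l * δ) * R₀ ≤ K l := by
    intro l hl
    rw [hR₀, hK0, ← integral_const_mul, hKint l]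
    apply integral_mono (hk_int.const_mul _) (hInt l)
    intro a
    rcases eq_or_lt_of_le (hk_nonneg a) with h | h
    · simp [hfdef, ← h]
    · have ha : a ∈ Icc δ amax := by
        by_contra hc; rw [hk_supp a hc] at h; exact lt_irrefl 0 h
      have : Real.exp (-l * δ) ≤ Real.exp (-l * a) := by
        apply Real.exp_le_exp.2; nlinarith [ha.1]
      simp only [hfdef]; nlinarith
  -- continuity
  have hcont : Continuous K := by
    have hc : Continuous fun l => ∫ a, f l a := by
      rw [continuous_iff_continuousAt]
      intro l₀
      apply continuousAt_of_dominated (bound := (Icc δ amax).indicator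
        fun _ => Real.exp ((|l₀| + 1) * amax) * C)
      · exact Filter.Eventually.of_forall fun l => (hfmeas l).aestronglyMeasurable
      · have hev : ∀ᶠ l in nhds l₀, |l - l₀| < 1 := by
          filter_upwards [Metric.ball_mem_nhds l₀ one_pos] with l hl
          simpa [Real.dist_eq] using hl
        filter_upwards [hev] with l hl
        apply ae_of_all
        intro a
        by_cases ha : a ∈ Icc δ amax
        · rw [indicator_of_mem ha, Real.norm_eq_abs,
            abs_of_nonneg (mul_nonneg (Real.exp_pos _).le (hk_nonneg a))]
          apply mul_le_mul _ (hC a) (hk_nonneg a) (Real.exp_pos _).le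
          apply Real.exp_le_exp.2
          have hl' : |l| ≤ |l₀| + 1 := by
            have := abs_sub_abs_le_abs_sub l l₀; linarith
          have h1 : -l ≤ |l| := neg_le_abs l
          have h2 : (0:ℝ) ≤ a := le_trans hδ.le ha.1
          nlinarith [abs_nonneg l, ha.2, abs_nonneg l₀]
        · rw [indicator_of_notMem ha]
          simp [hfdef, hk_supp a ha]
      · rw [integrable_indicator_iff measurableSet_Icc]
        exact integrableOn_const measure_Icc_lt_top.ne
      · apply ae_of_all
        intro a
        exact ((Real.continuous_exp.comp ((continuous_id.neg).mul
          continuous_const)).mul continuous_const).continuousAt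
    have : K = fun l => ∫ a, f l a := funext hKint
    rw [this]; exact hc
  -- existence of a root
  set L := Real.log R₀ / δ with hLdef
  set l₁ := min L 0 with hl₁def
  set l₂ := max L 0 with hl₂def
  have hl12 : l₁ ≤ l₂ := le_trans (min_le_right _ _) (le_max_right _ _)
  have h1 : 1 ≤ K l₁ := by
    have hb := hlb l₁ (min_le_right L 0)
    have hLl : l₁ * δ ≤ Real.log R₀ := by
      have h := min_le_left L 0
      rw [hl₁def]
      calc min L 0 * δ ≤ L * δ := by nlinarith [min_le_left L 0]
        _ = Real.log R₀ := by rw [hLdef]; field_simp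
    have hexp : Real.exp (-Real.log R₀) ≤ Real.exp (-l₁ * δ) := by
      apply Real.exp_le_exp.2; linarith [neg_mul l₁ δ]
    have h2 : (1:ℝ) = Real.exp (-Real.log R₀) * R₀ := by
      rw [Real.exp_neg, Real.exp_log hR0pos, inv_mul_cancel₀ hR0pos.ne']
    calc (1:ℝ) = Real.exp (-Real.log R₀) * R₀ := h2
      _ ≤ Real.exp (-l₁ * δ) * R₀ := mul_le_mul_of_nonneg_right hexp hR0pos.le
      _ ≤ K l₁ := hb
  have h2 : K l₂ ≤ 1 := by
    have hb := hub l₂ (le_max_right L 0)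
    have hLl : Real.log R₀ ≤ l₂ * δ := by
      rw [hl₂def]
      calc Real.log R₀ = L * δ := by rw [hLdef]; field_simp
        _ ≤ max L 0 * δ := by nlinarith [le_max_left L 0]
    have hexp : Real.exp (-l₂ * δ) ≤ Real.exp (-Real.log R₀) := by
      apply Real.exp_le_exp.2; linarith [neg_mul l₂ δ]
    have heq : Real.exp (-Real.log R₀) * R₀ = 1 := by
      rw [Real.exp_neg, Real.exp_log hR0pos, inv_mul_cancel₀ hR0pos.ne']
    calc K l₂ ≤ Real.exp (-l₂ * δ) * R₀ := hb
      _ ≤ Real.exp (-Real.log R₀) * R₀ := mul_le_mul_of_nonneg_right hexp hR0pos.le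
      _ = 1 := heq
  obtain ⟨r, _, hKr⟩ := intermediate_value_Icc' hl12 hcont.continuousOn ⟨h2, h1⟩
  have huniq : ∀ y, K y = 1 → y = r := by
    intro y hy
    rcases lt_trichotomy y r with h | h | h
    · exfalso; have := hanti y r h; rw [hy, hKr] at this; exact lt_irrefl 1 this
    · exact h
    · exfalso; have := hanti r y h; rw [hy, hKr] at this; exact lt_irrefl 1 this
  refine ⟨⟨r, hKr, huniq⟩, ?_⟩
  intro s hs
  rcases lt_trichotomy s 0 with h | h | h
  · have h1 : K 0 < K s := hanti s 0 h
    rw [hs] at h1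
    have : R₀ - 1 < 0 := by rw [hR₀]; linarith
    rw [Real.sign_of_neg this, Real.sign_of_neg h]
  · rw [h] at hs ⊢
    rw [hR₀, hs]
    simp
  · have h1 : K s < K 0 := hanti 0 s h
    rw [hs] at h1
    have : 0 < R₀ - 1 := by rw [hR₀]; linarith
    rw [Real.sign_of_pos this, Real.sign_of_pos h]
end

section
/- Let Σ be a d×d real matrix, U, V ∈ ℝ^d, and k(a) = U · (e^{aΣ} V). If b : ℝ → ℝ is continuous and bounded on (−∞, T], with suitable decay ensuring convergence, and y(t) = e^{tΣ} ∫_{−∞}^t e^{−θΣ} V b(θ) dθ, then y satisfies the ODE y′ = Σy + b V, and b(t) = U · y(t) holds if and only if b satisfies the renewal equation b(t) = ∫₀^∞ k(a) b(t−a) da. -/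
open MeasureTheory Set Matrix

/-- For `k(a) = U · (e^{aΣ} V)` and
`y(t) = e^{tΣ} ∫_{−∞}^t e^{−θΣ} V b(θ) dθ`, the function `y` satisfies the ODE
`y' = Σ y + b V`, and `b(t) = U · y(t)` for all `t` if and only if `b` satisfies
the renewal equation `b(t) = ∫₀^∞ k(a) b(t−a) da`. -/
theorem RE_is_ODE_in_disguise
    (d : ℕ) (Sig : Matrix (Fin d) (Fin d) ℝ) (U V : Fin d → ℝ)
    (k : ℝ → ℝ)
    (hk : ∀ a, k a = U ⬝ᵥ (NormedSpace.exp (a • Sig)).mulVec V)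
    (b : ℝ → ℝ) (hb_cont : Continuous b)
    (hb_int : ∀ t : ℝ,
      IntegrableOn (fun θ => (NormedSpace.exp ((-θ) • Sig)).mulVec (b θ • V)) (Iic t))
    (y : ℝ → (Fin d → ℝ))
    (hy : ∀ t, y t = (NormedSpace.exp (t • Sig)).mulVec
      (∫ θ in Iic t, (NormedSpace.exp ((-θ) • Sig)).mulVec (b θ • V))) :
    (∀ t, HasDerivAt y (Sig.mulVec (y t) + b t • V) t) ∧
      ((∀ t, b t = U ⬝ᵥ y t) ↔ ∀ t, b t = ∫ a in Ioi (0:ℝ), k a * b (t - a)) := by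
  classical
  letI : SeminormedRing (Matrix (Fin d) (Fin d) ℝ) := Matrix.linftyOpSemiNormedRing
  letI : NormedRing (Matrix (Fin d) (Fin d) ℝ) := Matrix.linftyOpNormedRing
  letI : NormedAlgebra ℝ (Matrix (Fin d) (Fin d) ℝ) := Matrix.linftyOpNormedAlgebra
  letI : NormedAlgebra ℚ (Matrix (Fin d) (Fin d) ℝ) := Matrix.linftyOpNormedAlgebra
  set M : ℝ → Matrix (Fin d) (Fin d) ℝ := fun t => NormedSpace.exp (t • Sig) with hM
  set f : ℝ → (Fin d → ℝ) := fun θ => (M (-θ)).mulVec (b θ • V) with hf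
  have hfint : ∀ t : ℝ, IntegrableOn f (Iic t) := by
    intro t
    have := hb_int t
    simpa [hf, hM, neg_smul] using this
  set F : ℝ → (Fin d → ℝ) := fun t => ∫ θ in Iic t, f θ with hF
  obtain rfl : y = fun t => (M t).mulVec (F t) := by
    funext t
    simpa [hM, hf, hF, neg_smul] using hy t
  -- basic facts
  have hMcont : Continuous M :=
    NormedSpace.exp_continuous.comp (continuous_id.smul continuous_const)
  have hfcont : Continuous f :=
    (hMcont.comp continuous_neg).matrix_mulVec (hb_cont.smul continuous_const)
  have hMmul : ∀ s u : ℝ, M s * M u = M (s + u) := by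
    intro s u
    rw [hM]
    dsimp only
    rw [add_smul]
    exact (NormedSpace.exp_add_of_commute
      (((Commute.refl Sig).smul_left s).smul_right u)).symm
  have hM0 : M 0 = 1 := by simp [hM]
  -- derivative of F
  have hFderiv : ∀ t : ℝ, HasDerivAt F (f t) t := by
    intro t
    have hrepr : ∀ u : ℝ, F u = F t + ∫ x in t..u, f x := by
      intro u
      have h := intervalIntegral.integral_Iic_sub_Iic (hfint t) (hfint u)
      rw [hF]
      dsimp only
      exact sub_eq_iff_eq_add'.mp h
    have h1 : HasDerivAt (fun u => F t + ∫ x in t..u, f x) (f t) t := by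
      refine HasDerivAt.const_add _ ?_
      exact intervalIntegral.integral_hasDerivAt_right
        (hfcont.intervalIntegrable t t)
        (hfcont.stronglyMeasurableAtFilter _ _)
        hfcont.continuousAt
    exact h1.congr_of_eventuallyEq (Filter.Eventually.of_forall fun u => hrepr u)
  -- derivative of M
  have hMderiv : ∀ t : ℝ, HasDerivAt M (Sig * M t) t := fun t =>
    hasDerivAt_exp_smul_const' Sig t
  -- bundle mulVec as a clm-valued function
  let Λ : Matrix (Fin d) (Fin d) ℝ →ₗ[ℝ] ((Fin d → ℝ) →L[ℝ] (Fin d → ℝ)) :=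
    { toFun := fun A => LinearMap.toContinuousLinearMap A.mulVecLin
      map_add' := by intro A B; ext x; simp [Matrix.add_mulVec]
      map_smul' := by intro c A; ext x; simp [Matrix.smul_mulVec] }
  let ΛL : Matrix (Fin d) (Fin d) ℝ →L[ℝ] ((Fin d → ℝ) →L[ℝ] (Fin d → ℝ)) :=
    LinearMap.toContinuousLinearMap Λ
  have happ : ∀ (A : Matrix (Fin d) (Fin d) ℝ) (x : Fin d → ℝ), ΛL A x = A.mulVec x :=
    fun A x => rfl
  have hMfM : ∀ t, (M t).mulVec (f t) = b t • V := by
    intro t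
    rw [hf]
    dsimp only
    rw [Matrix.mulVec_mulVec, hMmul, add_neg_cancel, hM0, Matrix.one_mulVec]
  have hyderiv : ∀ t, HasDerivAt (fun u => (M u).mulVec (F u))
      (Sig.mulVec ((M t).mulVec (F t)) + b t • V) t := by
    intro t
    have hc : HasDerivAt (fun u => ΛL (M u)) (ΛL (Sig * M t)) t :=
      ΛL.hasFDerivAt.comp_hasDerivAt t (hMderiv t)
    have h2 := hc.clm_apply (hFderiv t)
    simp only [happ] at h2
    have h3 : (Sig * M t).mulVec (F t) + (M t).mulVec (f t)
        = Sig.mulVec ((M t).mulVec (F t)) + b t • V := by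
      rw [← Matrix.mulVec_mulVec, hMfM]
    rw [h3] at h2
    exact h2
  refine ⟨hyderiv, ?_⟩
  -- key identity for the renewal equation
  have key : ∀ t : ℝ, U ⬝ᵥ (M t).mulVec (F t) = ∫ a in Ioi (0:ℝ), k a * b (t - a) := by
    intro t
    -- the continuous linear functional x ↦ U ⬝ᵥ (M t) *ᵥ x
    let L0 : (Fin d → ℝ) →ₗ[ℝ] ℝ :=
      { toFun := fun x => U ⬝ᵥ (M t).mulVec x
        map_add' := by intro x z; rw [Matrix.mulVec_add, dotProduct_add]
        map_smul' := by
          intro c x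
          rw [Matrix.mulVec_smul, dotProduct_smul, RingHom.id_apply, smul_eq_mul] }
    let L : (Fin d → ℝ) →L[ℝ] ℝ := LinearMap.toContinuousLinearMap L0
    have hL : ∀ x, L x = U ⬝ᵥ (M t).mulVec x := fun x => rfl
    have h1 : U ⬝ᵥ (M t).mulVec (F t) = ∫ θ in Iic t, L (f θ) := by
      rw [← hL, hF]
      exact (L.integral_comp_comm (hfint t)).symm
    have h2 : ∀ θ : ℝ, L (f θ) = k (t - θ) * b θ := by
      intro θ
      rw [hL, hf]
      dsimp only
      rw [Matrix.mulVec_mulVec, hMmul, Matrix.mulVec_smul, dotProduct_smul, smul_eq_mul,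
        hk, mul_comm]
      congr 2
    have h3 : (fun θ => t - θ) ⁻¹' (Ici (0:ℝ)) = Iic t := by
      ext x; simp [sub_nonneg]
    have h4 : ∫ θ in Iic t, k (t - θ) * b θ
        = ∫ a in Ici (0:ℝ), k a * b (t - a) := by
      have hmp : MeasurePreserving (fun θ : ℝ => t - θ) volume volume :=
        Measure.measurePreserving_sub_left volume t
      have := hmp.setIntegral_preimage_emb (MeasurableEquiv.subLeft t).measurableEmbedding
        (fun a => k a * b (t - a)) (Ici (0:ℝ))
      rw [h3] at this
      rw [← this]
      refine setIntegral_congr_fun measurableSet_Iic fun θ _ => ?_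
      simp [sub_sub_cancel]
    rw [h1]
    simp_rw [h2]
    rw [h4, integral_Ici_eq_integral_Ioi]
  constructor
  · intro h t; rw [h t, key t]
  · intro h t; rw [h t, ← key t]
end
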